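/- Let N ≥ 1 and let θ : {1,…,N} → ℝ be any angles. For every x in the convex hull of V̄, the vector Λ R_θ x belongs to P̄° ∩ H̄; that is, (i) ⟨Λ R_θ x, y⟩ ≤ 1 for every y with ∑_{i,j}|y(i,j)| ≤ 1, and (ii) ∑_{i=1}^N (Λ R_θ x)(i,j) = 0 for j = 1, 2. -/

import Mathlib

open Finset

/-- The vertex set `V̄` of vectors `v_{p,q,j}` with `p ≠ q`, `j ∈ {1,2}`. -/
def vertexSetVbar (N : ℕ) : Set (Fin N × Fin 2 → ℝ) :=
  {v | ∃ p q : Fin N, ∃ j : Fin 2, p ≠ q ∧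
    v = fun il => if il = (p, j) then (1 / 2 : ℝ) else if il = (q, j) then -(1 / 2 : ℝ) else 0}

/-- The block-diagonal rotation `R_θ` acting on `ℝ^{2N}`. -/
noncomputable def rotMap {N : ℕ} (θ : Fin N → ℝ) (x : Fin N × Fin 2 → ℝ) :
    Fin N × Fin 2 → ℝ :=
  fun il =>
    if il.2 = 0 then Real.cos (θ il.1) * x (il.1, 0) - Real.sin (θ il.1) * x (il.1, 1)
    else Real.sin (θ il.1) * x (il.1, 0) + Real.cos (θ il.1) * x (il.1, 1)

/-- The orthogonal projection `Λ`: `(Λx)(i,j) = x(i,j) − (1/N) ∑_k x(k,j)`. -/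
noncomputable def lamMap {N : ℕ} (x : Fin N × Fin 2 → ℝ) : Fin N × Fin 2 → ℝ :=
  fun il => x il - (1 / (N : ℝ)) * ∑ k, x (k, il.2)

lemma rot_lin {N : ℕ} (θ : Fin N → ℝ) (a b : ℝ) (x y : Fin N × Fin 2 → ℝ) :
    rotMap θ (a • x + b • y) = a • rotMap θ x + b • rotMap θ y := by
  funext il
  simp only [rotMap, Pi.add_apply, Pi.smul_apply, smul_eq_mul]
  split <;> ring

lemma lam_lin {N : ℕ} (a b : ℝ) (x y : Fin N × Fin 2 → ℝ) :
    lamMap (a • x + b • y) = a • lamMap x + b • lamMap y := by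
  funext il
  simp only [lamMap, Pi.add_apply, Pi.smul_apply, smul_eq_mul]
  rw [Finset.sum_add_distrib, ← Finset.mul_sum, ← Finset.mul_sum]
  ring

lemma vertex_bound {N : ℕ} (θ : Fin N → ℝ) (v : Fin N × Fin 2 → ℝ)
    (hv : v ∈ vertexSetVbar N) : ∀ il, |lamMap (rotMap θ v) il| ≤ 1 := by
  obtain ⟨p, q, j, hpq, rfl⟩ := hv
  have hN2 : 2 ≤ N := by
    have : Nontrivial (Fin N) := ⟨p, q, hpq⟩
    exact (by simpa using Fintype.one_lt_card (α := Fin N) : 1 < N)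
  set v : Fin N × Fin 2 → ℝ := fun il =>
    if il = (p, j) then (1 / 2 : ℝ) else if il = (q, j) then -(1 / 2 : ℝ) else 0 with hvdef
  have hrow : ∀ k : Fin N, |v (k,0)| + |v (k,1)| =
      (if k = p then (1/2:ℝ) else 0) + (if k = q then (1/2:ℝ) else 0) := by
    intro k
    fin_cases j
    · have h0 : v (k,0) = if k = p then (1/2:ℝ) else if k = q then -(1/2) else 0 := by
        simp [hvdef, Prod.ext_iff]
      have h1 : v (k,1) = 0 := by simp [hvdef, Prod.ext_iff]
      rw [h0, h1]
      split_ifs with h1 h2 <;>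
        first | exact absurd (h1.symm.trans h2) hpq | norm_num
    · have h0 : v (k,0) = 0 := by simp [hvdef, Prod.ext_iff]
      have h1 : v (k,1) = if k = p then (1/2:ℝ) else if k = q then -(1/2) else 0 := by
        simp [hvdef, Prod.ext_iff]
      rw [h0, h1]
      split_ifs with h1 h2 <;>
        first | exact absurd (h1.symm.trans h2) hpq | norm_num
  have hrowle : ∀ k : Fin N, |v (k,0)| + |v (k,1)| ≤ 1/2 := by
    intro k
    rw [hrow k]
    split_ifs with h1 h2 <;> first
      | (exfalso; exact hpq (h1 ▸ h2 ▸ rfl)) | norm_num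
  have hw : ∀ i : Fin N, ∀ l : Fin 2, |rotMap θ v (i,l)| ≤ |v (i,0)| + |v (i,1)| := by
    intro i l
    have hc := Real.abs_cos_le_one (θ i)
    have hs := Real.abs_sin_le_one (θ i)
    have h0 := abs_nonneg (v (i,0))
    have h1 := abs_nonneg (v (i,1))
    simp only [rotMap]
    split
    · calc |Real.cos (θ i) * v (i,0) - Real.sin (θ i) * v (i,1)|
          ≤ |Real.cos (θ i) * v (i,0)| + |Real.sin (θ i) * v (i,1)| := abs_sub _ _
        _ = |Real.cos (θ i)| * |v (i,0)| + |Real.sin (θ i)| * |v (i,1)| := by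
            rw [abs_mul, abs_mul]
        _ ≤ |v (i,0)| + |v (i,1)| := by nlinarith
    · calc |Real.sin (θ i) * v (i,0) + Real.cos (θ i) * v (i,1)|
          ≤ |Real.sin (θ i) * v (i,0)| + |Real.cos (θ i) * v (i,1)| := abs_add_le _ _
        _ = |Real.sin (θ i)| * |v (i,0)| + |Real.cos (θ i)| * |v (i,1)| := by
            rw [abs_mul, abs_mul]
        _ ≤ |v (i,0)| + |v (i,1)| := by nlinarith
  intro il
  obtain ⟨i, l⟩ := il
  have hsum : |∑ k, rotMap θ v (k, l)| ≤ 1 := by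
    calc |∑ k, rotMap θ v (k, l)| ≤ ∑ k, |rotMap θ v (k, l)| := Finset.abs_sum_le_sum_abs _ _
      _ ≤ ∑ k, (|v (k,0)| + |v (k,1)|) := Finset.sum_le_sum fun k _ => hw k l
      _ = 1 := by
          simp only [hrow, Finset.sum_add_distrib, Finset.sum_ite_eq', Finset.mem_univ,
            if_true]
          norm_num
  have hwi : |rotMap θ v (i, l)| ≤ 1/2 := (hw i l).trans (hrowle i)
  have hNpos : (0:ℝ) < N := by exact_mod_cast (by omega : 0 < N)
  have hinv : (1 / (N:ℝ)) ≤ 1/2 := by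
    rw [div_le_div_iff₀ hNpos (by norm_num)]
    have : (2:ℝ) ≤ N := by exact_mod_cast hN2
    linarith
  have : |lamMap (rotMap θ v) (i,l)| ≤ |rotMap θ v (i,l)| + (1/(N:ℝ)) * |∑ k, rotMap θ v (k,l)| := by
    simp only [lamMap]
    calc |rotMap θ v (i,l) - (1/(N:ℝ)) * ∑ k, rotMap θ v (k,l)|
        ≤ |rotMap θ v (i,l)| + |(1/(N:ℝ)) * ∑ k, rotMap θ v (k,l)| := abs_sub _ _
      _ = |rotMap θ v (i,l)| + (1/(N:ℝ)) * |∑ k, rotMap θ v (k,l)| := by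
          rw [abs_mul, abs_of_pos (one_div_pos.mpr hNpos)]
  have h2 : (1/(N:ℝ)) * |∑ k, rotMap θ v (k,l)| ≤ 1/2 := by
    calc (1/(N:ℝ)) * |∑ k, rotMap θ v (k,l)| ≤ (1/(N:ℝ)) * 1 := by
          apply mul_le_mul_of_nonneg_left hsum (by positivity)
      _ ≤ 1/2 := by linarith
  linarith

theorem lam_rot_convexHull_Vbar_subset_polar_inter_Hbar {N : ℕ} (hN : 1 ≤ N)
    (θ : Fin N → ℝ) (x : Fin N × Fin 2 → ℝ)
    (hx : x ∈ convexHull ℝ (vertexSetVbar N)) :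
    (∀ y : Fin N × Fin 2 → ℝ, (∑ il, |y il| ≤ 1) →
        ∑ il, lamMap (rotMap θ x) il * y il ≤ 1) ∧
      ∀ j : Fin 2, ∑ i, lamMap (rotMap θ x) (i, j) = 0 := by
  have hNR : (N:ℝ) ≠ 0 := Nat.cast_ne_zero.mpr (by omega)
  constructor
  · intro y hy
    have hz : ∀ il, |lamMap (rotMap θ x) il| ≤ 1 := by
      have hC : Convex ℝ {x : Fin N × Fin 2 → ℝ | ∀ il, |lamMap (rotMap θ x) il| ≤ 1} := by
        intro u hu w hw a b ha hb hab il
        rw [rot_lin, lam_lin]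
        simp only [Pi.add_apply, Pi.smul_apply, smul_eq_mul]
        calc |a * lamMap (rotMap θ u) il + b * lamMap (rotMap θ w) il|
            ≤ |a * lamMap (rotMap θ u) il| + |b * lamMap (rotMap θ w) il| := abs_add_le _ _
          _ = a * |lamMap (rotMap θ u) il| + b * |lamMap (rotMap θ w) il| := by
              rw [abs_mul, abs_mul, abs_of_nonneg ha, abs_of_nonneg hb]
          _ ≤ a * 1 + b * 1 := by
              gcongr
              · exact hu il
              · exact hw il
          _ = 1 := by linarith
      exact convexHull_min (fun v hv il => vertex_bound θ v hv il) hC hx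
    calc ∑ il, lamMap (rotMap θ x) il * y il
        ≤ ∑ il, |y il| := by
          apply Finset.sum_le_sum
          intro il _
          calc lamMap (rotMap θ x) il * y il ≤ |lamMap (rotMap θ x) il * y il| := le_abs_self _
            _ = |lamMap (rotMap θ x) il| * |y il| := abs_mul _ _
            _ ≤ 1 * |y il| := mul_le_mul_of_nonneg_right (hz il) (abs_nonneg _)
            _ = |y il| := one_mul _
      _ ≤ 1 := hy
  · intro j
    simp only [lamMap, Finset.sum_sub_distrib, Finset.sum_const, Finset.card_univ,
      Fintype.card_fin, nsmul_eq_mul]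
    field_simp
    ring
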